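/- For all m ≥ 0 and n ≥ 0, the closed-form expression a_{m,n} = ∏_{r ∈ S_m} p_{n+r} holds, where S_m = { r : 0 ≤ r ≤ m and the binomial coefficient C(m,r) is odd }. -/

import Mathlib

/-- `Z a b = a*b / gcd(a,b)^2`. -/
def Zfun (a b : ℕ) : ℕ := a * b / Nat.gcd a b ^ 2

/-- The array: `ent 0 n` is the `n`-th prime (0-indexed), and
`ent (m+1) n = Z (ent m n) (ent m (n+1))`. -/
noncomputable def ent : ℕ → ℕ → ℕ
  | 0, n => Nat.nth Nat.Prime n
  | m + 1, n => Zfun (ent m n) (ent m (n + 1))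

/-- The left edge `d_m`. -/
noncomputable def dseq (m : ℕ) : ℕ := ent m 0

lemma p_prime (i : ℕ) : (Nat.nth Nat.Prime i).Prime := Nat.prime_nth_prime i

lemma p_inj : Function.Injective (Nat.nth Nat.Prime) :=
  Nat.nth_injective Nat.infinite_setOf_prime

lemma coprime_prods {S T : Finset ℕ} (h : Disjoint S T) :
    Nat.Coprime (∏ i ∈ S, Nat.nth Nat.Prime i) (∏ i ∈ T, Nat.nth Nat.Prime i) := by
  apply Nat.Coprime.prod_left
  intro i hi
  apply Nat.Coprime.prod_right
  intro j hj
  rw [Nat.coprime_primes (p_prime i) (p_prime j)]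
  intro hij
  exact Finset.disjoint_left.mp h hi ((p_inj hij).symm ▸ hj)

lemma Zfun_prod (S T : Finset ℕ) :
    Zfun (∏ i ∈ S, Nat.nth Nat.Prime i) (∏ i ∈ T, Nat.nth Nat.Prime i)
      = ∏ i ∈ symmDiff S T, Nat.nth Nat.Prime i := by
  have hg : 0 < ∏ i ∈ S ∩ T, Nat.nth Nat.Prime i :=
    Finset.prod_pos (fun i _ => (p_prime i).pos)
  have hS : (∏ i ∈ S, Nat.nth Nat.Prime i)
      = (∏ i ∈ S \ T, Nat.nth Nat.Prime i) * ∏ i ∈ S ∩ T, Nat.nth Nat.Prime i := by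
    rw [← Finset.prod_union (Finset.disjoint_sdiff_inter S T), Finset.sdiff_union_inter]
  have hT : (∏ i ∈ T, Nat.nth Nat.Prime i)
      = (∏ i ∈ T \ S, Nat.nth Nat.Prime i) * ∏ i ∈ S ∩ T, Nat.nth Nat.Prime i := by
    rw [Finset.inter_comm, ← Finset.prod_union (Finset.disjoint_sdiff_inter T S),
      Finset.sdiff_union_inter]
  have hco : Nat.Coprime (∏ i ∈ S \ T, Nat.nth Nat.Prime i) (∏ i ∈ T \ S, Nat.nth Nat.Prime i) :=
    coprime_prods (disjoint_sdiff_sdiff)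
  have hgcd : Nat.gcd (∏ i ∈ S, Nat.nth Nat.Prime i) (∏ i ∈ T, Nat.nth Nat.Prime i)
      = ∏ i ∈ S ∩ T, Nat.nth Nat.Prime i := by
    rw [hS, hT, Nat.gcd_mul_right, hco, one_mul]
  have hsymm : (∏ i ∈ symmDiff S T, Nat.nth Nat.Prime i)
      = (∏ i ∈ S \ T, Nat.nth Nat.Prime i) * ∏ i ∈ T \ S, Nat.nth Nat.Prime i := by
    rw [symmDiff_def, Finset.sup_eq_union,
      Finset.prod_union disjoint_sdiff_sdiff]
  unfold Zfun
  rw [hgcd, hS, hT, hsymm]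
  have : (∏ i ∈ S \ T, Nat.nth Nat.Prime i) * (∏ i ∈ S ∩ T, Nat.nth Nat.Prime i) *
      ((∏ i ∈ T \ S, Nat.nth Nat.Prime i) * ∏ i ∈ S ∩ T, Nat.nth Nat.Prime i)
      = ((∏ i ∈ S \ T, Nat.nth Nat.Prime i) * ∏ i ∈ T \ S, Nat.nth Nat.Prime i)
        * (∏ i ∈ S ∩ T, Nat.nth Nat.Prime i) ^ 2 := by ring
  rw [this, Nat.mul_div_cancel _ (pow_pos hg 2)]

def fset (m : ℕ) : Finset ℕ := (Finset.range (m + 1)).filter (fun r => Odd (Nat.choose m r))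

lemma mem_image_fset {n m k : ℕ} :
    k ∈ (fset m).image (n + ·) ↔ n ≤ k ∧ Odd (Nat.choose m (k - n)) := by
  simp only [fset, Finset.mem_image, Finset.mem_filter, Finset.mem_range]
  constructor
  · rintro ⟨r, ⟨hr, ho⟩, rfl⟩
    rw [Nat.add_sub_cancel_left]
    exact ⟨Nat.le_add_right _ _, ho⟩
  · rintro ⟨hnk, ho⟩
    refine ⟨k - n, ⟨?_, ho⟩, by omega⟩
    by_contra h
    push_neg at h
    rw [Nat.choose_eq_zero_of_lt (by omega)] at ho
    simp at ho

lemma fset_succ (m n : ℕ) :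
    (fset (m + 1)).image (n + ·) = symmDiff ((fset m).image (n + ·)) ((fset m).image ((n + 1) + ·)) := by
  ext k
  rw [Finset.mem_symmDiff, mem_image_fset, mem_image_fset, mem_image_fset]
  rcases lt_or_ge k n with h | h
  · constructor
    · rintro ⟨h1, _⟩; omega
    · rintro (⟨⟨h1, _⟩, _⟩ | ⟨⟨h1, _⟩, _⟩) <;> omega
  rcases Nat.eq_or_lt_of_le h with h2 | h2
  · subst h2
    simp only [Nat.sub_self, Nat.choose_zero_right]
    constructor
    · intro _; left; refine ⟨⟨le_refl _, by simp⟩, ?_⟩; rintro ⟨h3, _⟩; omega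
    · intro _; exact ⟨le_refl _, odd_one⟩
  · obtain ⟨s, rfl⟩ : ∃ s, k = n + 1 + s := ⟨k - n - 1, by omega⟩
    have e1 : n + 1 + s - n = s + 1 := by omega
    have e2 : n + 1 + s - (n + 1) = s := by omega
    rw [e1, e2, Nat.choose_succ_succ]
    simp only [Nat.succ_eq_add_one, Nat.odd_iff] at *
    omega

lemma ent_eq (m n : ℕ) : ent m n = ∏ i ∈ (fset m).image (n + ·), Nat.nth Nat.Prime i := by
  induction m generalizing n with
  | zero =>
    show Nat.nth Nat.Prime n = _
    have : fset 0 = {0} := by decide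
    rw [this]
    simp
  | succ m ih =>
    show Zfun (ent m n) (ent m (n + 1)) = _
    rw [ih, ih, Zfun_prod, fset_succ]

theorem ent_closed_form (m n : ℕ) :
    ent m n =
      ∏ r ∈ Finset.filter (fun r => Odd (Nat.choose m r)) (Finset.range (m + 1)),
        Nat.nth Nat.Prime (n + r) := by
  rw [ent_eq, Finset.prod_image (by intro a _ b _ h; simp only at h; omega)]
  rfl
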